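/- Let k₀, k₁ ≥ 2 and let N be a natural number with 2·N > k₀·k₁ and N > k₀ + k₁ − 1, and let ψ be a surjective partial function from Fin k₀ × Fin k₁ to Fin N. Then there exist a pair (a₀, a₁) in the domain of ψ whose fiber is a singleton (i.e., ψ(b₀, b₁) = ψ(a₀, a₁) implies (b₀, b₁) = (a₀, a₁)) and a value i < N with i ≠ ψ(a₀, a₁) such that every (b₀, b₁) with ψ(b₀, b₁) = i satisfies b₀ ≠ a₀ and b₁ ≠ a₁. -/

import Mathlib

/-- If 2N > k₀k₁ and N > k₀ + k₁ − 1, every surjective partial function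
ψ : Fin k₀ × Fin k₁ → Fin N has a singleton fiber {a} and a value i ≠ ψ(a)
none of whose preimages shares a coordinate with a. -/
theorem stmt10 (k₀ k₁ N : ℕ) (hk₀ : 2 ≤ k₀) (hk₁ : 2 ≤ k₁)
    (hN1 : k₀ * k₁ < 2 * N) (hN2 : k₀ + k₁ - 1 < N)
    (ψ : Fin k₀ × Fin k₁ → Option (Fin N))
    (hsurj : ∀ i : Fin N, ∃ p, ψ p = some i) :
    ∃ (a : Fin k₀ × Fin k₁) (i : Fin N),
      (ψ a).isSome ∧
      (∀ b, ψ b = ψ a → b = a) ∧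
      ψ a ≠ some i ∧
      ∀ b : Fin k₀ × Fin k₁, ψ b = some i → b.1 ≠ a.1 ∧ b.2 ≠ a.2 := by
  classical
  set F : Fin N → Finset (Fin k₀ × Fin k₁) :=
    fun i => Finset.univ.filter (fun b => ψ b = some i) with hF
  have hdisj : ∀ i ∈ (Finset.univ : Finset (Fin N)), ∀ j ∈ Finset.univ,
      i ≠ j → Disjoint (F i) (F j) := by
    intro i _ j _ hij
    rw [Finset.disjoint_left]
    intro b hb1 hb2
    rw [hF, Finset.mem_filter] at hb1 hb2
    rw [hb1.2] at hb2
    exact hij (Option.some_injective _ hb2.2)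
  have hsum : ∑ i, (F i).card ≤ k₀ * k₁ := by
    rw [← Finset.card_biUnion hdisj]
    calc (Finset.univ.biUnion F).card
        ≤ (Finset.univ : Finset (Fin k₀ × Fin k₁)).card :=
          Finset.card_le_card (Finset.subset_univ _)
      _ = k₀ * k₁ := by simp
  have hexists : ∃ i : Fin N, (F i).card ≤ 1 := by
    by_contra h
    push_neg at h
    have h2 : 2 * N ≤ ∑ i, (F i).card := by
      calc 2 * N = ∑ _i : Fin N, 2 := by simp [mul_comm]
        _ ≤ _ := Finset.sum_le_sum (fun i _ => h i)
    omega
  obtain ⟨i₀, hi₀⟩ := hexists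
  obtain ⟨a, ha⟩ := hsurj i₀
  have hamem : a ∈ F i₀ := by simp [hF, ha]
  have huniq : ∀ b, ψ b = some i₀ → b = a := by
    intro b hb
    have hbmem : b ∈ F i₀ := by simp [hF, hb]
    exact Finset.card_le_one.mp hi₀ b hbmem a hamem
  set V : Finset (Fin N) := Finset.univ.filter
    (fun j => ∃ b, ψ b = some j ∧ (b.1 = a.1 ∨ b.2 = a.2)) with hV
  set cross : Finset (Fin k₀ × Fin k₁) :=
    ({a.1} ×ˢ Finset.univ) ∪ (Finset.univ ×ˢ {a.2}) with hcross
  have hcrosscard : cross.card ≤ k₀ + k₁ - 1 := by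
    have h1 : ({a.1} ×ˢ (Finset.univ : Finset (Fin k₁))).card = k₁ := by simp
    have h2 : ((Finset.univ : Finset (Fin k₀)) ×ˢ ({a.2} : Finset (Fin k₁))).card = k₀ := by
      simp
    have hint : a ∈ ({a.1} ×ˢ Finset.univ) ∩ (Finset.univ ×ˢ ({a.2} : Finset (Fin k₁))) := by
      simp
    have hle : 1 ≤ (({a.1} ×ˢ Finset.univ) ∩
        (Finset.univ ×ˢ ({a.2} : Finset (Fin k₁)))).card :=
      Finset.card_pos.mpr ⟨a, hint⟩
    have heq := Finset.card_union_add_card_inter ({a.1} ×ˢ Finset.univ)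
      (Finset.univ ×ˢ ({a.2} : Finset (Fin k₁)))
    rw [h1, h2] at heq
    rw [hcross]
    omega
  have hVcard : V.card ≤ cross.card := by
    apply Finset.card_le_card_of_injOn
      (fun j => if h : ∃ b, ψ b = some j ∧ (b.1 = a.1 ∨ b.2 = a.2) then h.choose else a)
    · intro j hj
      rw [Finset.mem_coe, hV, Finset.mem_filter] at hj
      obtain ⟨-, hj⟩ := hj
      simp only [dif_pos hj]
      obtain ⟨-, hor⟩ := hj.choose_spec
      rw [Finset.mem_coe, hcross, Finset.mem_union]
      rcases hor with h | h
      · exact Or.inl (Finset.mem_product.mpr ⟨by simp [h], Finset.mem_univ _⟩)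
      · exact Or.inr (Finset.mem_product.mpr ⟨Finset.mem_univ _, by simp [h]⟩)
    · intro j hj j' hj' hfe
      rw [Finset.mem_coe, hV, Finset.mem_filter] at hj hj'
      obtain ⟨-, hj⟩ := hj
      obtain ⟨-, hj'⟩ := hj'
      simp only [dif_pos hj, dif_pos hj'] at hfe
      have e1 := hj.choose_spec.1
      have e2 := hj'.choose_spec.1
      rw [hfe, e2] at e1
      exact Option.some_injective _ e1.symm
  have hVlt : V.card < N := lt_of_le_of_lt (hVcard.trans hcrosscard) hN2
  have hex : ∃ i, i ∉ V := by
    by_contra h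
    push_neg at h
    have : V = Finset.univ := Finset.eq_univ_iff_forall.mpr h
    rw [this] at hVlt
    simp at hVlt
  obtain ⟨i, hi⟩ := hex
  have hiV : ¬ ∃ b, ψ b = some i ∧ (b.1 = a.1 ∨ b.2 = a.2) := by
    intro hc
    exact hi (by rw [hV, Finset.mem_filter]; exact ⟨Finset.mem_univ _, hc⟩)
  refine ⟨a, i, ?_, ?_, ?_, ?_⟩
  · rw [ha]; rfl
  · intro b hb; rw [ha] at hb; exact huniq b hb
  · intro hc
    exact hiV ⟨a, hc, Or.inl rfl⟩
  · intro b hb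
    constructor
    · intro h; exact hiV ⟨b, hb, Or.inl h⟩
    · intro h; exact hiV ⟨b, hb, Or.inr h⟩
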